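/- Let q be a real number with 0 < q < 1, let n ≥ 1 and m ≥ 1 be integers. Then ∑_{l=0}^{n−1} (−1)^l · q^l · [l]_q^m = ( (−1)^{n+1} · q^n · E*_{m,q}(n) + E*_{m,q} ) / [2]_q, where E*_{m,q} = [2]_q · (1/(1−q))^m · ∑_{j=0}^m C(m,j)·(−1)^j/(1 + q^{j+1}) and E*_{m,q}(n) = [2]_q · (1/(1−q))^m · ∑_{j=0}^m C(m,j)·(−1)^j·q^{nj}/(1 + q^{j+1}). -/

import Mathlib

open Filter Finset Topology

/-- for `0 < q < 1` and `n, m ≥ 1`,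
`∑_{l=0}^{n−1} (−1)^l q^l [l]_q^m = ((−1)^{n+1} q^n E*_{m,q}(n) + E*_{m,q})/[2]_q`. -/
theorem kim_alt_sum (q : ℝ) (hq0 : 0 < q) (hq1 : q < 1) (n m : ℕ)
    (hn : 1 ≤ n) (hm : 1 ≤ m) :
    ∑ l ∈ Finset.range n, (-1:ℝ)^l * q^l * ((1 - q^l)/(1-q))^m
    = ((-1)^(n+1) * q^n *
        ((1+q) * (1/(1-q))^m *
          ∑ j ∈ Finset.range (m+1), (m.choose j : ℝ) * (-1)^j * q^(n*j) / (1 + q^(j+1)))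
      + (1+q) * (1/(1-q))^m *
          ∑ j ∈ Finset.range (m+1), (m.choose j : ℝ) * (-1)^j / (1 + q^(j+1))) / (1+q) := by
  have hne : (1:ℝ) - q ≠ 0 := by linarith
  have hq2 : (0:ℝ) < 1 + q := by linarith
  have hq2' : (1:ℝ) + q ≠ 0 := ne_of_gt hq2
  set A : ℝ := (1/(1-q))^m with hA
  have hdj : ∀ j : ℕ, (1:ℝ) + q^(j+1) ≠ 0 := fun j => by positivity
  -- geometric sum
  have key : ∀ j : ℕ, ∑ l ∈ Finset.range n, (-(q^(j+1)))^l
      = (1 + (-1:ℝ)^(n+1) * q^(n*(j+1))) / (1 + q^(j+1)) := by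
    intro j
    have hp : (0:ℝ) < q^(j+1) := pow_pos hq0 _
    have hx : -(q^(j+1)) ≠ 1 := by nlinarith
    rw [geom_sum_eq hx]
    have h1 : (-(q^(j+1)))^n = (-1:ℝ)^n * q^(n*(j+1)) := by
      rw [neg_pow, ← pow_mul, mul_comm (j+1) n]
    rw [h1, div_eq_div_iff (by nlinarith) (hdj j), pow_succ]
    ring
  -- expand LHS
  have lhs_eq : ∑ l ∈ Finset.range n, (-1:ℝ)^l * q^l * ((1 - q^l)/(1-q))^m
      = A * ∑ j ∈ Finset.range (m+1),
          ((m.choose j : ℝ) * (-1)^j *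
            ((1 + (-1:ℝ)^(n+1) * q^(n*(j+1))) / (1 + q^(j+1)))) := by
    have step1 : ∀ l : ℕ, (-1:ℝ)^l * q^l * ((1 - q^l)/(1-q))^m
        = ∑ j ∈ Finset.range (m+1),
            A * ((m.choose j : ℝ) * (-1)^j) * (-(q^(j+1)))^l := by
      intro l
      have h1 : ((1:ℝ) - q^l)^m
          = ∑ j ∈ Finset.range (m+1), (-(q^l))^j * 1^(m-j) * (m.choose j : ℝ) := by
        rw [← add_pow]; ring_nf
      rw [div_pow, h1, Finset.sum_div, Finset.mul_sum]
      refine Finset.sum_congr rfl fun j _ => ?_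
      have h2 : (-(q^l))^j = (-1:ℝ)^j * q^(l*j) := by rw [neg_pow, ← pow_mul]
      have h3 : (-(q^(j+1)))^l = (-1:ℝ)^l * q^((j+1)*l) := by rw [neg_pow, ← pow_mul]
      rw [h2, h3, hA]
      have h4 : q^((j+1)*l) = q^(l*j) * q^l := by
        rw [← pow_add]; ring_nf
      rw [h4]
      field_simp
      ring_nf
      rw [mul_assoc, ← mul_pow, inv_mul_cancel₀ hne, one_pow, mul_one]
    rw [Finset.sum_congr rfl fun l _ => step1 l, Finset.sum_comm, Finset.mul_sum]
    refine Finset.sum_congr rfl fun j _ => ?_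
    rw [← Finset.mul_sum, key j]
    ring
  rw [lhs_eq]
  -- now handle RHS
  have main : ∀ j ∈ Finset.range (m+1),
      (1+q) * (A * ((m.choose j : ℝ) * (-1)^j *
        ((1 + (-1:ℝ)^(n+1) * q^(n*(j+1))) / (1 + q^(j+1)))))
      = ((-1:ℝ)^(n+1) * q^n * (1+q)) * (A * ((m.choose j : ℝ) * (-1)^j * q^(n*j) / (1 + q^(j+1))))
        + (1+q) * (A * ((m.choose j : ℝ) * (-1)^j / (1 + q^(j+1)))) := by
    intro j _
    have h5 : q^(n*(j+1)) = q^n * q^(n*j) := by rw [← pow_add]; ring_nf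
    rw [h5]
    field_simp
    ring
  rw [eq_div_iff hq2']
  calc A * (∑ j ∈ Finset.range (m+1), ((m.choose j : ℝ) * (-1)^j *
            ((1 + (-1:ℝ)^(n+1) * q^(n*(j+1))) / (1 + q^(j+1))))) * (1+q)
      = ∑ j ∈ Finset.range (m+1), (1+q) * (A * ((m.choose j : ℝ) * (-1)^j *
            ((1 + (-1:ℝ)^(n+1) * q^(n*(j+1))) / (1 + q^(j+1))))) := by
        rw [← Finset.mul_sum, ← Finset.mul_sum]; ring
    _ = ∑ j ∈ Finset.range (m+1),
          (((-1:ℝ)^(n+1) * q^n * (1+q)) * (A * ((m.choose j : ℝ) * (-1)^j * q^(n*j) / (1 + q^(j+1))))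
            + (1+q) * (A * ((m.choose j : ℝ) * (-1)^j / (1 + q^(j+1))))) :=
        Finset.sum_congr rfl main
    _ = ((-1:ℝ)^(n+1) * q^n * ((1+q) * A *
          ∑ j ∈ Finset.range (m+1), (m.choose j : ℝ) * (-1)^j * q^(n*j) / (1 + q^(j+1)))
        + (1+q) * A *
          ∑ j ∈ Finset.range (m+1), (m.choose j : ℝ) * (-1)^j / (1 + q^(j+1))) := by
        rw [Finset.sum_add_distrib, ← Finset.mul_sum, ← Finset.mul_sum, ← Finset.mul_sum,
          ← Finset.mul_sum]
        ring
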